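/- Let K_B > 0, m_s, m_k > 0, n_s, n_k > 0, λ_{sk} > 0, u_s, u_k ∈ ℝ³, T_s, T_k > 0, and let f_s : ℝ³ → ℝ be integrable with ∫ f_s(v) dv = n_s and ∫ v f_s(v) dv = n_s u_s, each component of v f_s integrable. Set ν_{sk} = λ_{sk} n_k, a_{sk} = m_k/(m_s+m_k), u_{sk} = (1−a_{sk}) u_s + a_{sk} u_k, b_{sk} = 2a_{sk}m_s/(m_s+m_k), γ_{sk} = (m_s a_{sk}/3)(2m_k/(m_s+m_k)−a_{sk}), T_{sk} = (1−b_{sk})T_s + b_{sk}T_k + (γ_{sk}/K_B)|u_s−u_k|², and M(v;a,b) = (2πb)^{−3/2} exp(−|v−a|²/(2b)). Then the momentum exchange rate of the BBGSP bi-species operator equals ∫ m_s v ν_{sk} ( n_s M(v; u_{sk}, K_B T_{sk}/m_s) − f_s(v) ) dv = λ_{sk} (m_s m_k/(m_s+m_k)) n_s n_k (u_k − u_s) =: 𝓡_{sk}; in particular, if λ_{sk} = λ_{ks} then 𝓡_{sk} + 𝓡_{ks} = 0, so the BBGSP model conserves total momentum. -/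

import Mathlib

open MeasureTheory RealInnerProductSpace
open Real

local notation "E" => EuclideanSpace ℝ (Fin 3)

lemma aux_exp_rw (d : ℝ) (c : E) (v : E) :
    -‖v - c‖ ^ 2 / (2 * d) = -(1 / (2 * d)) * ‖v - c‖ ^ 2 := by ring

lemma aux_finrank : (Module.finrank ℝ (EuclideanSpace ℝ (Fin 3)) : ℝ) = 3 := by
  simp [finrank_euclideanSpace]

lemma aux_int_exp {b : ℝ} (hb : 0 < b) : Integrable (fun v : E => rexp (-b * ‖v‖ ^ 2)) := by
  have h := (GaussianFourier.integrable_cexp_neg_mul_sq_norm_add (V := E) (b := (b : ℂ))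
    (by simpa using hb) 0 (0 : E)).norm
  simpa [Complex.norm_exp, ← Complex.ofReal_pow, Complex.ofReal_re, neg_mul] using h

lemma aux_bound {b : ℝ} (hb : 0 < b) (v : E) :
    ‖rexp (-b * ‖v‖ ^ 2) • v‖ ≤ Real.sqrt (2 / b) * rexp (-(3 * b / 4) * ‖v‖ ^ 2) := by
  set t := ‖v‖ with htdef
  have ht : 0 ≤ t := norm_nonneg v
  rw [norm_smul, Real.norm_eq_abs, abs_of_pos (Real.exp_pos _), ← htdef]
  have h1 : b / 2 * t ^ 2 ≤ rexp (b / 2 * t ^ 2) := by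
    have := Real.add_one_le_exp (b / 2 * t ^ 2); linarith
  have h2 : t ≤ Real.sqrt (2 / b) * rexp (b / 4 * t ^ 2) := by
    have hR : 0 ≤ Real.sqrt (2 / b) * rexp (b / 4 * t ^ 2) := by positivity
    have hsq : t ^ 2 ≤ (Real.sqrt (2 / b) * rexp (b / 4 * t ^ 2)) ^ 2 := by
      rw [mul_pow, Real.sq_sqrt (by positivity),
        show rexp (b / 4 * t ^ 2) ^ 2 = rexp (b / 2 * t ^ 2) by
          rw [pow_two, ← Real.exp_add]; ring_nf,
        div_mul_eq_mul_div, le_div_iff₀ hb]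
      nlinarith [Real.exp_pos (b / 2 * t ^ 2)]
    calc t = Real.sqrt (t ^ 2) := (Real.sqrt_sq ht).symm
      _ ≤ Real.sqrt ((Real.sqrt (2 / b) * rexp (b / 4 * t ^ 2)) ^ 2) := Real.sqrt_le_sqrt hsq
      _ = _ := Real.sqrt_sq hR
  calc rexp (-b * t ^ 2) * t ≤ rexp (-b * t ^ 2) * (Real.sqrt (2 / b) * rexp (b / 4 * t ^ 2)) :=
        mul_le_mul_of_nonneg_left h2 (Real.exp_pos _).le
    _ = Real.sqrt (2 / b) * (rexp (-b * t ^ 2) * rexp (b / 4 * t ^ 2)) := by ring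
    _ = Real.sqrt (2 / b) * rexp (-(3 * b / 4) * t ^ 2) := by
        rw [← Real.exp_add]; ring_nf

lemma aux_int_exp_smul {b : ℝ} (hb : 0 < b) :
    Integrable (fun v : E => rexp (-b * ‖v‖ ^ 2) • v) := by
  have hmeas : AEStronglyMeasurable (fun v : E => rexp (-b * ‖v‖ ^ 2) • v) :=
    (Continuous.smul (f := fun v : E => rexp (-b * ‖v‖ ^ 2)) (by fun_prop) continuous_id).aestronglyMeasurable
  exact ((aux_int_exp (b := 3 * b / 4) (by positivity)).const_mul (Real.sqrt (2 / b))).mono'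
    hmeas (Filter.Eventually.of_forall (aux_bound hb))

lemma aux_moment_zero {b : ℝ} (hb : 0 < b) :
    (∫ v : E, rexp (-b * ‖v‖ ^ 2) • v) = 0 := by
  have h := integral_neg_eq_self (fun v : E => rexp (-b * ‖v‖ ^ 2) • v) volume
  simp only [norm_neg, smul_neg, integral_neg] at h
  set I := ∫ v : E, rexp (-b * ‖v‖ ^ 2) • v with hI
  have h3 : I + I = 0 := by nth_rewrite 1 [← h]; exact neg_add_cancel I
  have h4 : (2 : ℝ) • I = 0 := by rw [two_smul]; exact h3
  exact (smul_eq_zero.1 h4).resolve_left (by norm_num)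

lemma aux_mass {d : ℝ} (hd : 0 < d) (c : E) :
    (∫ v : E, rexp (-‖v - c‖ ^ 2 / (2 * d))) = (2 * π * d) ^ ((3 : ℝ) / 2) := by
  simp_rw [aux_exp_rw d c]
  rw [integral_sub_right_eq_self (μ := volume)
    (fun v : E => rexp (-(1 / (2 * d)) * ‖v‖ ^ 2)) c]
  rw [GaussianFourier.integral_rexp_neg_mul_sq_norm (by positivity), aux_finrank]
  congr 1
  field_simp

lemma aux_int_g {d : ℝ} (hd : 0 < d) (c : E) :
    Integrable (fun v : E => rexp (-(1 / (2 * d)) * ‖v‖ ^ 2) • (v + c)) := by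
  have h1 := aux_int_exp_smul (b := 1 / (2 * d)) (by positivity)
  have h2 := (aux_int_exp (b := 1 / (2 * d)) (by positivity)).smul_const c
  refine (h1.add h2).congr (Filter.Eventually.of_forall fun v => ?_)
  simp [smul_add]

lemma aux_int_expc {d : ℝ} (hd : 0 < d) (c : E) :
    Integrable (fun v : E => rexp (-‖v - c‖ ^ 2 / (2 * d))) := by
  simp_rw [aux_exp_rw d c]
  exact (aux_int_exp (b := 1 / (2 * d)) (by positivity)).comp_sub_right c

lemma aux_int_expc_smul {d : ℝ} (hd : 0 < d) (c : E) :
    Integrable (fun v : E => rexp (-‖v - c‖ ^ 2 / (2 * d)) • v) := by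
  have h := (aux_int_g hd c).comp_sub_right c
  refine h.congr (Filter.Eventually.of_forall fun v => ?_)
  simp only [sub_add_cancel]
  rw [aux_exp_rw d c]

lemma aux_moment {d : ℝ} (hd : 0 < d) (c : E) :
    (∫ v : E, rexp (-‖v - c‖ ^ 2 / (2 * d)) • v) = ((2 * π * d) ^ ((3 : ℝ) / 2)) • c := by
  have hrw : (fun v : E => rexp (-‖v - c‖ ^ 2 / (2 * d)) • v)
      = fun v : E => (fun w : E => rexp (-(1 / (2 * d)) * ‖w‖ ^ 2) • (w + c)) (v - c) := by
    funext v
    simp only [sub_add_cancel]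
    rw [aux_exp_rw d c]
  rw [hrw, integral_sub_right_eq_self (μ := volume)
    (fun w : E => rexp (-(1 / (2 * d)) * ‖w‖ ^ 2) • (w + c)) c]
  have hsplit : (fun w : E => rexp (-(1 / (2 * d)) * ‖w‖ ^ 2) • (w + c))
      = fun w : E => rexp (-(1 / (2 * d)) * ‖w‖ ^ 2) • w
        + rexp (-(1 / (2 * d)) * ‖w‖ ^ 2) • c := by
    funext w; rw [smul_add]
  rw [hsplit, integral_add (aux_int_exp_smul (by positivity))
    ((aux_int_exp (by positivity)).smul_const c),
    aux_moment_zero (by positivity), zero_add, integral_smul_const,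
    GaussianFourier.integral_rexp_neg_mul_sq_norm (by positivity), aux_finrank]
  congr 2
  field_simp

theorem bbgsp_momentum_exchange_rate
    (KB ms mk ns nk lamsk lamks : ℝ) (hKB : 0 < KB) (hms : 0 < ms) (hmk : 0 < mk)
    (hns : 0 < ns) (hnk : 0 < nk) (hlamsk : 0 < lamsk)
    (us uk : EuclideanSpace ℝ (Fin 3)) (Ts Tk : ℝ) (hTs : 0 < Ts) (hTk : 0 < Tk)
    (fs : EuclideanSpace ℝ (Fin 3) → ℝ)
    (hfint : Integrable fs)
    (hfvint : Integrable (fun v => fs v • v))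
    (hf0 : ∫ v, fs v = ns)
    (hf1 : (∫ v, fs v • v) = ns • us)
    (νsk : ℝ) (hνsk : νsk = lamsk * nk)
    (a : ℝ) (ha : a = mk / (ms + mk))
    (usk : EuclideanSpace ℝ (Fin 3)) (husk : usk = (1 - a) • us + a • uk)
    (b : ℝ) (hb : b = 2 * a * ms / (ms + mk))
    (γ : ℝ) (hγ : γ = ms * a / 3 * (2 * mk / (ms + mk) - a))
    (Tsk : ℝ) (hTsk : Tsk = (1 - b) * Ts + b * Tk + γ / KB * ‖us - uk‖ ^ 2)
    (Mx : EuclideanSpace ℝ (Fin 3) → EuclideanSpace ℝ (Fin 3) → ℝ → ℝ)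
    (hMx : ∀ v c d, Mx v c d = (2 * Real.pi * d) ^ (-(3 : ℝ) / 2)
      * Real.exp (-‖v - c‖ ^ 2 / (2 * d)))
    (Rsk Rks : EuclideanSpace ℝ (Fin 3))
    (hRsk : Rsk = (lamsk * (ms * mk / (ms + mk)) * ns * nk) • (uk - us))
    (hRks : Rks = (lamks * (mk * ms / (mk + ms)) * nk * ns) • (us - uk)) :
    (∫ v, (ms * (νsk * (ns * Mx v usk (KB * Tsk / ms) - fs v))) • v) = Rsk
      ∧ (lamsk = lamks → Rsk + Rks = 0) := by
  have hmsk : 0 < ms + mk := by linarith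
  constructor
  · set d := KB * Tsk / ms with hd
    have ha' : 0 < a := by rw [ha]; positivity
    have hb' : 0 < b := by rw [hb]; positivity
    have hblt : b < 1 := by
      have hbeq : b = 2 * ms * mk / ((ms + mk) ^ 2) := by rw [hb, ha]; field_simp
      rw [hbeq, div_lt_one (by positivity)]
      nlinarith [sq_nonneg (ms - mk)]
    have hγ' : 0 ≤ γ := by
      have h2a : 2 * mk / (ms + mk) - a = a := by rw [ha]; ring
      rw [hγ, h2a]; positivity
    have hTskpos : 0 < Tsk := by
      rw [hTsk]
      have h1 : 0 < (1 - b) * Ts := mul_pos (by linarith) hTs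
      have h2 : 0 < b * Tk := mul_pos hb' hTk
      have h3 : 0 ≤ γ / KB * ‖us - uk‖ ^ 2 := by positivity
      linarith
    have hd' : 0 < d := by rw [hd]; positivity
    have hrwM : (fun v : EuclideanSpace ℝ (Fin 3) => Mx v usk d • v)
        = fun v => ((2 * π * d) ^ (-(3 : ℝ) / 2))
          • (rexp (-‖v - usk‖ ^ 2 / (2 * d)) • v) := by
      funext v; rw [hMx, smul_smul]
    have hint2 : Integrable (fun v : EuclideanSpace ℝ (Fin 3) => Mx v usk d • v) := by
      rw [hrwM]
      exact (aux_int_expc_smul hd' usk).smul ((2 * π * d) ^ (-(3 : ℝ) / 2))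
    have hIMx : (∫ v : EuclideanSpace ℝ (Fin 3), Mx v usk d • v) = usk := by
      rw [hrwM, integral_smul, aux_moment hd' usk, smul_smul,
        ← Real.rpow_add (by positivity)]
      norm_num
    have hfun : (fun v : EuclideanSpace ℝ (Fin 3) =>
          (ms * (νsk * (ns * Mx v usk d - fs v))) • v)
        = fun v => (ms * νsk * ns) • (Mx v usk d • v) - (ms * νsk) • (fs v • v) := by
      funext v; module
    have i1 : Integrable (fun v : EuclideanSpace ℝ (Fin 3) =>
        (ms * νsk * ns) • (Mx v usk d • v)) := hint2.smul (ms * νsk * ns)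
    have i2 : Integrable (fun v : EuclideanSpace ℝ (Fin 3) =>
        (ms * νsk) • (fs v • v)) := hfvint.smul (ms * νsk)
    rw [hfun, integral_sub i1 i2, integral_smul, integral_smul,
      hIMx, hf1, husk, hRsk, hνsk, ha]
    match_scalars <;> field_simp <;> ring
  · intro h
    rw [hRsk, hRks, ← h]
    match_scalars <;> field_simp <;> ring
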